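/- Let E/F be a finite tamely ramified extension of nonarchimedean local fields and let c, c' ∈ E^× with c^{−1}c' ∈ 1 + p_E. If E = F[c] and c is minimal over F, then E = F[c'] and c' is minimal over F. (In particular, c is minimal relative to E/F if and only if c' is.) -/

import Mathlib

/-- A surjective additive `ℤ`-valued valuation on a field `K`, written additively with
values in `WithTop ℤ` (with `v 0 = ⊤`). -/
structure IsZValuation (K : Type*) [Field K] (v : K → WithTop ℤ) : Prop where
  map_zero : v 0 = ⊤
  map_one : v 1 = 0
  map_mul : ∀ x y : K, v (x * y) = v x + v y
  min_le_map_add : ∀ x y : K, min (v x) (v y) ≤ v (x + y)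
  surjective : ∀ n : ℤ, ∃ x : K, v x = (n : WithTop ℤ)

namespace IsZValuation

variable {K : Type*} [Field K] {v : K → WithTop ℤ}

theorem nsmul_coe (k : ℕ) (n : ℤ) : k • ((n : ℤ) : WithTop ℤ) = ((k * n : ℤ) : WithTop ℤ) := by
  induction k with
  | zero => simp
  | succ k ih =>
    rw [succ_nsmul, ih, ← WithTop.coe_add]
    congr 1
    push_cast
    ring

theorem v_ne_top (hv : IsZValuation K v) {x : K} (hx : x ≠ 0) : v x ≠ ⊤ := by
  intro h
  have h1 : v (x * x⁻¹) = v x + v x⁻¹ := hv.map_mul x x⁻¹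
  rw [mul_inv_cancel₀ hx, hv.map_one, h, top_add] at h1
  exact (WithTop.coe_ne_top (a := (0 : ℤ)) (by exact_mod_cast h1))

theorem v_eq_coe (hv : IsZValuation K v) {x : K} (hx : x ≠ 0) :
    ∃ n : ℤ, v x = (n : WithTop ℤ) := by
  obtain ⟨n, hn⟩ := WithTop.ne_top_iff_exists.mp (hv.v_ne_top hx)
  exact ⟨n, hn.symm⟩

theorem ne_zero_of_v_eq (hv : IsZValuation K v) {x : K} {n : ℤ} (h : v x = (n : WithTop ℤ)) :
    x ≠ 0 := by
  rintro rfl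
  rw [hv.map_zero] at h
  exact (WithTop.top_ne_coe h)

theorem v_neg (hv : IsZValuation K v) (x : K) : v (-x) = v x := by
  have hm1 : v (-1 : K) = 0 := by
    have h1 : v ((-1 : K) * (-1)) = v (-1) + v (-1) := hv.map_mul _ _
    rw [neg_mul_neg, one_mul, hv.map_one] at h1
    obtain ⟨n, hn⟩ := hv.v_eq_coe (show (-1 : K) ≠ 0 by norm_num)
    rw [hn, ← WithTop.coe_add] at h1
    have h2 : n + n = 0 := by exact_mod_cast h1.symm
    have h3 : n = 0 := by omega
    rw [hn, h3]
    rfl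
  calc v (-x) = v ((-1) * x) := by rw [neg_one_mul]
  _ = v (-1) + v x := hv.map_mul _ _
  _ = v x := by rw [hm1, zero_add]

theorem le_v_add (hv : IsZValuation K v) {t : WithTop ℤ} {x y : K}
    (hx : t ≤ v x) (hy : t ≤ v y) : t ≤ v (x + y) :=
  le_trans (le_min hx hy) (hv.min_le_map_add x y)

theorem le_v_sub (hv : IsZValuation K v) {t : WithTop ℤ} {x y : K}
    (hx : t ≤ v x) (hy : t ≤ v y) : t ≤ v (x - y) := by
  rw [sub_eq_add_neg]
  exact hv.le_v_add hx (by rwa [hv.v_neg])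

theorem v_inv (hv : IsZValuation K v) {x : K} {n : ℤ} (h : v x = (n : WithTop ℤ)) :
    v x⁻¹ = ((-n : ℤ) : WithTop ℤ) := by
  have hx : x ≠ 0 := hv.ne_zero_of_v_eq h
  have h1 : v (x * x⁻¹) = v x + v x⁻¹ := hv.map_mul x x⁻¹
  rw [mul_inv_cancel₀ hx, hv.map_one, h] at h1
  obtain ⟨k, hk⟩ := hv.v_eq_coe (inv_ne_zero hx)
  rw [hk, ← WithTop.coe_add] at h1
  have h2 : n + k = 0 := by exact_mod_cast h1.symm
  have h3 : k = -n := by omega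
  rw [hk, h3]

theorem v_pow (hv : IsZValuation K v) {x : K} {a : ℤ} (h : v x = (a : WithTop ℤ)) (n : ℕ) :
    v (x ^ n) = ((n * a : ℤ) : WithTop ℤ) := by
  induction n with
  | zero => simpa using hv.map_one
  | succ n ih =>
    rw [pow_succ, hv.map_mul, ih, h, ← WithTop.coe_add]
    congr 1
    push_cast
    ring

theorem v_zpow (hv : IsZValuation K v) {x : K} {a : ℤ} (h : v x = (a : WithTop ℤ)) (n : ℤ) :
    v (x ^ n) = ((n * a : ℤ) : WithTop ℤ) := by
  cases n with
  | ofNat k =>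
    rw [Int.ofNat_eq_coe, zpow_natCast, hv.v_pow h k]
  | negSucc k =>
    rw [zpow_negSucc, hv.v_inv (hv.v_pow h (k + 1))]
    congr 1
    rw [Int.negSucc_eq]
    push_cast
    ring

theorem v_pow_nonneg (hv : IsZValuation K v) {x : K} (h : 0 ≤ v x) (n : ℕ) : 0 ≤ v (x ^ n) := by
  induction n with
  | zero => simp [hv.map_one]
  | succ n ih =>
    rw [pow_succ, hv.map_mul]
    exact add_nonneg ih h

theorem v_pow_sub_pow (hv : IsZValuation K v) {a b : K} (ha : 0 ≤ v a) (hb : 0 ≤ v b) (n : ℕ) :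
    v (a - b) ≤ v (a ^ n - b ^ n) := by
  induction n with
  | zero => simp [hv.map_zero]
  | succ n ih =>
    have key : a ^ (n + 1) - b ^ (n + 1) = a * (a ^ n - b ^ n) + (a - b) * b ^ n := by ring
    rw [key]
    refine hv.le_v_add ?_ ?_
    · rw [hv.map_mul]
      calc v (a - b) ≤ v (a ^ n - b ^ n) := ih
      _ ≤ v a + v (a ^ n - b ^ n) := le_add_of_nonneg_left ha
    · rw [hv.map_mul]
      exact le_add_of_nonneg_right (hv.v_pow_nonneg hb n)

theorem le_v_sum (hv : IsZValuation K v) {t : WithTop ℤ} {ι : Type*} (s : Finset ι) (f : ι → K)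
    (h : ∀ i ∈ s, t ≤ v (f i)) : t ≤ v (∑ i ∈ s, f i) := by
  classical
  induction s using Finset.induction_on with
  | empty => simp [hv.map_zero]
  | insert _ _ hx ih =>
    rw [Finset.sum_insert hx]
    exact hv.le_v_add (h _ (Finset.mem_insert_self _ _))
      (ih fun i hi => h i (Finset.mem_insert_of_mem hi))

end IsZValuation

open scoped Classical in
/-- The norm associated to a `ℤ`-valued valuation, with base `ρ`. -/
noncomputable def zvnorm {K : Type*} [Field K] (v : K → WithTop ℤ) (ρ : ℝ) (x : K) : ℝ :=
  if x = 0 then 0 else ρ ^ ((v x).untopD 0)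

namespace IsZValuation

variable {K : Type*} [Field K] {v : K → WithTop ℤ} {ρ : ℝ}

theorem zvnorm_zero : zvnorm v ρ (0 : K) = 0 := if_pos rfl

theorem zvnorm_eq (hv : IsZValuation K v) {x : K} {n : ℤ} (h : v x = (n : WithTop ℤ)) :
    zvnorm v ρ x = ρ ^ n := by
  rw [zvnorm, if_neg (hv.ne_zero_of_v_eq h), h, WithTop.untopD_coe]

theorem zvnorm_nonneg (hρ : 0 < ρ) (x : K) : 0 ≤ zvnorm v ρ x := by
  rw [zvnorm]
  split
  · exact le_refl 0
  · exact (zpow_pos hρ _).le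

theorem zvnorm_pos (hv : IsZValuation K v) (hρ : 0 < ρ) {x : K} (hx : x ≠ 0) :
    0 < zvnorm v ρ x := by
  obtain ⟨n, hn⟩ := hv.v_eq_coe hx
  rw [hv.zvnorm_eq hn]
  exact zpow_pos hρ _

theorem zvnorm_eq_zero_iff (hv : IsZValuation K v) (hρ : 0 < ρ) {x : K} :
    zvnorm v ρ x = 0 ↔ x = 0 := by
  constructor
  · intro h
    by_contra hx
    exact (hv.zvnorm_pos hρ hx).ne' h
  · rintro rfl; exact zvnorm_zero

theorem zvnorm_mul (hv : IsZValuation K v) (hρ : 0 < ρ) (x y : K) :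
    zvnorm v ρ (x * y) = zvnorm v ρ x * zvnorm v ρ y := by
  rcases eq_or_ne x 0 with rfl | hx
  · simp [zvnorm_zero]
  rcases eq_or_ne y 0 with rfl | hy
  · simp [zvnorm_zero]
  obtain ⟨a, hax⟩ := hv.v_eq_coe hx
  obtain ⟨b, hby⟩ := hv.v_eq_coe hy
  have hxy : v (x * y) = ((a + b : ℤ) : WithTop ℤ) := by
    rw [hv.map_mul, hax, hby, ← WithTop.coe_add]
  rw [hv.zvnorm_eq hxy, hv.zvnorm_eq hax, hv.zvnorm_eq hby, zpow_add₀ hρ.ne']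

theorem zvnorm_neg (hv : IsZValuation K v) (x : K) : zvnorm v ρ (-x) = zvnorm v ρ x := by
  rcases eq_or_ne x 0 with rfl | hx
  · simp
  obtain ⟨a, hax⟩ := hv.v_eq_coe hx
  have : v (-x) = ((a : ℤ) : WithTop ℤ) := by rw [hv.v_neg, hax]
  rw [hv.zvnorm_eq this, hv.zvnorm_eq hax]

theorem zvnorm_le_iff (hv : IsZValuation K v) (hρ0 : 0 < ρ) (hρ1 : ρ < 1) {x : K} {N : ℤ} :
    zvnorm v ρ x ≤ ρ ^ N ↔ (N : WithTop ℤ) ≤ v x := by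
  rcases eq_or_ne x 0 with rfl | hx
  · simp [zvnorm_zero, (zpow_pos hρ0 N).le, hv.map_zero]
  obtain ⟨n, hn⟩ := hv.v_eq_coe hx
  rw [hv.zvnorm_eq hn, hn, WithTop.coe_le_coe, zpow_le_zpow_iff_right_of_lt_one₀ hρ0 hρ1]

theorem zvnorm_add_le (hv : IsZValuation K v) (hρ0 : 0 < ρ) (hρ1 : ρ < 1) (x y : K) :
    zvnorm v ρ (x + y) ≤ max (zvnorm v ρ x) (zvnorm v ρ y) := by
  rcases eq_or_ne x 0 with rfl | hx
  · simp [zvnorm_zero, le_max_right, zvnorm_nonneg hρ0 y]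
  rcases eq_or_ne y 0 with rfl | hy
  · simp [zvnorm_zero, le_max_left, zvnorm_nonneg hρ0 x]
  rcases eq_or_ne (x + y) 0 with hxy | hxy
  · rw [hxy, zvnorm_zero]
    exact le_max_of_le_left (zvnorm_nonneg hρ0 x)
  obtain ⟨a, hax⟩ := hv.v_eq_coe hx
  obtain ⟨b, hby⟩ := hv.v_eq_coe hy
  obtain ⟨cc, hc⟩ := hv.v_eq_coe hxy
  have hmin : ((min a b : ℤ) : WithTop ℤ) ≤ ((cc : ℤ) : WithTop ℤ) := by
    rw [← hc]
    refine le_trans ?_ (hv.min_le_map_add x y)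
    rw [hax, hby]
    rcases le_total a b with h | h <;> simp [min_eq_left, min_eq_right, h]
  have hcc : min a b ≤ cc := by exact_mod_cast hmin
  rw [hv.zvnorm_eq hc, hv.zvnorm_eq hax, hv.zvnorm_eq hby]
  calc ρ ^ cc ≤ ρ ^ min a b := zpow_le_zpow_right_of_le_one₀ hρ0 hρ1.le hcc
  _ ≤ max (ρ ^ a) (ρ ^ b) := by
      rcases le_total a b with h | h
      · rw [min_eq_left h]; exact le_max_left _ _
      · rw [min_eq_right h]; exact le_max_right _ _

/-- The `AddGroupNorm` associated to a `ℤ`-valued valuation. -/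
noncomputable def toAddGroupNorm (hv : IsZValuation K v) (hρ0 : 0 < ρ) (hρ1 : ρ < 1) :
    AddGroupNorm K where
  toFun := zvnorm v ρ
  map_zero' := zvnorm_zero
  add_le' := fun x y => le_trans (hv.zvnorm_add_le hρ0 hρ1 x y)
    (max_le (le_add_of_nonneg_right (zvnorm_nonneg hρ0 y))
      (le_add_of_nonneg_left (zvnorm_nonneg hρ0 x)))
  neg' := hv.zvnorm_neg
  eq_zero_of_map_eq_zero' := fun x h => (hv.zvnorm_eq_zero_iff hρ0).mp h

end IsZValuation

/-- `K`, equipped with the normalized valuation `v`, is a nonarchimedean local field with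
residue characteristic `p`: `v` is a surjective `ℤ`-valued valuation, `K` is (sequentially)
complete with respect to `v`, the residue field is finite (the valuation ring is covered by
finitely many residue classes), and `p` is a prime number of positive valuation (so the
residue field has characteristic `p`). -/
structure IsNonarchLocalField (K : Type*) [Field K] (v : K → WithTop ℤ) (p : ℕ) : Prop where
  isZValuation : IsZValuation K v
  complete : ∀ f : ℕ → K,
    (∀ N : ℤ, ∃ M : ℕ, ∀ m, M ≤ m → ∀ n, M ≤ n → (N : WithTop ℤ) ≤ v (f m - f n)) →
    ∃ L : K, ∀ N : ℤ, ∃ M : ℕ, ∀ n, M ≤ n → (N : WithTop ℤ) ≤ v (f n - L)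
  finiteResidue : ∃ S : Finset K, ∀ x : K, 0 ≤ v x → ∃ s ∈ S, 0 < v (x - s)
  prime : p.Prime
  v_p_pos : 0 < v (p : K)
/-- The residue class of `y` generates the residue field extension `k_E / k_F`:
every integer of `E` is congruent, modulo the maximal ideal of `E`, to a polynomial in
`y` whose coefficients are integers of `F`. -/
def ResidueGenerates (F E : Type*) [Field F] [Field E] [Algebra F E]
    (vF : F → WithTop ℤ) (vE : E → WithTop ℤ) (y : E) : Prop :=
  ∀ x : E, 0 ≤ vE x → ∃ Q : Polynomial F,
    (∀ n : ℕ, 0 ≤ vF (Q.coeff n)) ∧ 0 < vE (x - Polynomial.aeval y Q)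

/-- Auxiliary: evaluation of an integral polynomial at close points gives close values. -/
theorem v_aeval_sub_aeval {F E : Type*} [Field F] [Field E] [Algebra F E]
    {vF : F → WithTop ℤ} {vE : E → WithTop ℤ} (hvE : IsZValuation E vE) (e : ℕ)
    (hcomp : ∀ x : F, vE (algebraMap F E x) = e • vF x)
    {a b : E} (ha : 0 ≤ vE a) (hb : 0 ≤ vE b)
    (Q : Polynomial F) (hQ : ∀ n : ℕ, 0 ≤ vF (Q.coeff n)) :
    vE (a - b) ≤ vE (Polynomial.aeval a Q - Polynomial.aeval b Q) := by
  rw [Polynomial.aeval_eq_sum_range (p := Q) a, Polynomial.aeval_eq_sum_range (p := Q) b,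
    ← Finset.sum_sub_distrib]
  refine hvE.le_v_sum _ _ ?_
  intro i _
  rw [← smul_sub, Algebra.smul_def, hvE.map_mul, hcomp]
  calc vE (a - b) ≤ vE (a ^ i - b ^ i) := hvE.v_pow_sub_pow ha hb i
  _ ≤ (e : ℕ) • vF (Q.coeff i) + vE (a ^ i - b ^ i) :=
      le_add_of_nonneg_left (nsmul_nonneg (hQ i) e)

theorem one_le_of_pos_withTop {t : WithTop ℤ} (ht : 0 < t) : 1 ≤ t := by
  cases t with
  | top => exact le_top
  | coe k =>
    have hk : (0 : ℤ) < k := by exact_mod_cast ht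
    exact_mod_cast hk

/-- If `E/F` is a finite tamely ramified extension of nonarchimedean
local fields, `c, c' ∈ Eˣ` with `c⁻¹ * c' ∈ 1 + p_E`, and `c` generates `E` over `F` and is
minimal over `F`, then `c'` also generates `E` over `F` and is minimal over `F`. -/
theorem minimal_of_mul_one_add_maximalIdeal
    (p : ℕ) (F E : Type*) [Field F] [Field E] [Algebra F E] [FiniteDimensional F E]
    (vF : F → WithTop ℤ) (vE : E → WithTop ℤ)
    (hF : IsNonarchLocalField F vF p) (hE : IsNonarchLocalField E vE p)
    (e : ℕ) (hcomp : ∀ x : F, vE (algebraMap F E x) = e • vF x)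
    (htame : ¬ p ∣ e)
    (πF : F) (hπF : vF πF = 1)
    (c c' : Eˣ) (hcc' : 0 < vE ((↑(c⁻¹ * c') : E) - 1))
    (hgen : Algebra.adjoin F {(c : E)} = ⊤)
    (m : ℤ) (hm : vE ↑c = (m : WithTop ℤ))
    (hmin : Int.gcd m (e : ℤ) = 1 ∧
      ResidueGenerates F E vF vE (algebraMap F E πF ^ (-m) * (c : E) ^ e)) :
    Algebra.adjoin F {(c' : E)} = ⊤ ∧
      ∃ m' : ℤ, vE ↑c' = (m' : WithTop ℤ) ∧ Int.gcd m' (e : ℤ) = 1 ∧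
        ResidueGenerates F E vF vE (algebraMap F E πF ^ (-m') * (c' : E) ^ e) := by
  obtain ⟨hgcd, hRG⟩ := hmin
  have hvE := hE.isZValuation
  have hvF := hF.isZValuation
  have he0 : e ≠ 0 := fun h => htame (h ▸ dvd_zero p)
  have he1 : 1 ≤ e := Nat.one_le_iff_ne_zero.mpr he0
  -- the one-unit u
  set u : E := (↑(c⁻¹ * c') : E) with hu
  have hu1 : 0 < vE (u - 1) := hcc'
  have hone : vE (1 : E) = ((0 : ℤ) : WithTop ℤ) := by
    rw [hvE.map_one]; rfl
  have hu_nonneg : (((0 : ℤ)) : WithTop ℤ) ≤ vE u := by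
    have h1 : u = 1 + (u - 1) := by ring
    rw [h1]
    exact hvE.le_v_add (le_of_eq hone.symm) (by exact_mod_cast hu1.le)
  have hu0 : vE u = ((0 : ℤ) : WithTop ℤ) := by
    rcases lt_or_ge (((0 : ℤ)) : WithTop ℤ) (vE u) with h | h
    · exfalso
      have h2 : (((0 : ℤ)) : WithTop ℤ) < vE (1 : E) := by
        have h3 : (1 : E) = u - (u - 1) := by ring
        rw [h3]
        exact lt_of_lt_of_le (lt_min h (by exact_mod_cast hu1)) (hvE.le_v_sub
          (min_le_left _ _) (min_le_right _ _))
      rw [hone] at h2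
      exact lt_irrefl _ h2
    · exact le_antisymm h hu_nonneg
  have hcne : (↑c : E) ≠ 0 := Units.ne_zero c
  have hcu : (↑c' : E) = ↑c * u := by
    rw [hu, Units.val_mul, ← mul_assoc]
    congr 1
    rw [← Units.val_mul, mul_inv_cancel, Units.val_one, one_mul]
  have hc' : vE (↑c' : E) = (m : WithTop ℤ) := by
    rw [hcu, hvE.map_mul, hm, hu0, ← WithTop.coe_add, add_zero]
  -- y and y'
  set y : E := algebraMap F E πF ^ (-m) * (↑c : E) ^ e with hy
  set y' : E := algebraMap F E πF ^ (-m) * (↑c' : E) ^ e with hy'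
  have hπE : vE (algebraMap F E πF) = ((e : ℤ) : WithTop ℤ) := by
    rw [hcomp, hπF]
    have : (1 : WithTop ℤ) = ((1 : ℤ) : WithTop ℤ) := rfl
    rw [this, IsZValuation.nsmul_coe]
    norm_num
  have hyval : vE y = ((0 : ℤ) : WithTop ℤ) := by
    rw [hy, hvE.map_mul, hvE.v_zpow hπE (-m), hvE.v_pow hm e, ← WithTop.coe_add]
    congr 1
    ring
  have hy'val : vE y' = ((0 : ℤ) : WithTop ℤ) := by
    rw [hy', hvE.map_mul, hvE.v_zpow hπE (-m), hvE.v_pow hc' e, ← WithTop.coe_add]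
    congr 1
    ring
  have hyy' : y' = y * u ^ e := by
    rw [hy, hy', hcu, mul_pow]
    ring
  have hy'y : 0 < vE (y' - y) := by
    have h1 : y' - y = y * (u ^ e - 1) := by rw [hyy']; ring
    rw [h1, hvE.map_mul, hyval]
    have h2 : 0 < vE (u ^ e - 1) := by
      have h3 : vE (u - 1) ≤ vE (u ^ e - 1 ^ e) :=
        hvE.v_pow_sub_pow (by exact_mod_cast hu_nonneg) (le_of_eq hone.symm) e
      rw [one_pow] at h3
      exact lt_of_lt_of_le hu1 h3
    calc (0 : WithTop ℤ) = ((0 : ℤ) : WithTop ℤ) + 0 := by rw [add_zero]; rfl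
    _ < ((0 : ℤ) : WithTop ℤ) + vE (u ^ e - 1) := by
        exact WithTop.add_lt_add_left (WithTop.coe_ne_top) h2
  -- transferred residue generation
  have hRG' : ResidueGenerates F E vF vE y' := by
    intro x hx
    obtain ⟨Q, hQc, hQx⟩ := hRG x hx
    refine ⟨Q, hQc, ?_⟩
    have hsplit : x - Polynomial.aeval y' Q =
        (x - Polynomial.aeval y Q) + (Polynomial.aeval y Q - Polynomial.aeval y' Q) := by ring
    rw [hsplit]
    have h2 : 0 < vE (Polynomial.aeval y Q - Polynomial.aeval y' Q) := by
      refine lt_of_lt_of_le ?_ (v_aeval_sub_aeval hvE e hcomp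
        (le_of_eq hyval.symm) (le_of_eq hy'val.symm) Q hQc)
      have : y - y' = -(y' - y) := by ring
      rw [this, hvE.v_neg]
      exact hy'y
    exact lt_of_lt_of_le (lt_min hQx h2) (hvE.min_le_map_add _ _)
  -- norm setup
  have hρ0 : (0 : ℝ) < 1 / 2 := by norm_num
  have hρ1 : (1 / 2 : ℝ) < 1 := by norm_num
  have hρF0 : (0 : ℝ) < (1 / 2 : ℝ) ^ e := pow_pos hρ0 e
  have hρF1 : ((1 / 2 : ℝ)) ^ e < 1 := pow_lt_one₀ hρ0.le hρ1 he0
  letI nE : NormedAddCommGroup E :=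
    AddGroupNorm.toNormedAddCommGroup (hvE.toAddGroupNorm hρ0 hρ1)
  have hnE : ∀ x : E, ‖x‖ = zvnorm vE (1 / 2) x := fun _ => rfl
  letI nF : NormedAddCommGroup F :=
    AddGroupNorm.toNormedAddCommGroup (hvF.toAddGroupNorm hρF0 hρF1)
  have hnF : ∀ x : F, ‖x‖ = zvnorm vF ((1 / 2) ^ e) x := fun _ => rfl
  letI nfF : NormedField F :=
    { nF, ‹Field F› with
      norm_mul := fun a b => by
        rw [hnF, hnF, hnF]
        exact hvF.zvnorm_mul hρF0 a b }
  letI : NontriviallyNormedField F :=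
    { nfF with
      non_trivial := by
        refine ⟨πF⁻¹, ?_⟩
        have hπ1 : vF πF = ((1 : ℤ) : WithTop ℤ) := by exact_mod_cast hπF
        rw [hnF, hvF.zvnorm_eq (hvF.v_inv hπ1)]
        exact one_lt_zpow_of_neg₀ hρF0 hρF1 (by norm_num) }
  letI : NormedSpace F E :=
    { (inferInstance : Module F E) with
      norm_smul_le := fun a x => by
        rw [Algebra.smul_def, hnE, hnE, hnF, hvE.zvnorm_mul hρ0]
        refine le_of_eq ?_
        congr 1
        rcases eq_or_ne a 0 with rfl | ha
        · rw [map_zero]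
          simp [IsZValuation.zvnorm_zero]
        · obtain ⟨n, hn⟩ := hvF.v_eq_coe ha
          have halg : vE (algebraMap F E a) = ((e * n : ℤ) : WithTop ℤ) := by
            rw [hcomp, hn, IsZValuation.nsmul_coe]
          rw [hvE.zvnorm_eq halg, hvF.zvnorm_eq hn, ← zpow_natCast ((1:ℝ)/2) e, ← zpow_mul] }
  letI : CompleteSpace F := by
    apply Metric.complete_of_cauchySeq_tendsto
    intro f hf
    have hcau : ∀ N : ℤ, ∃ M : ℕ, ∀ m, M ≤ m → ∀ n, M ≤ n →
        (N : WithTop ℤ) ≤ vF (f m - f n) := by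
      intro N
      obtain ⟨M, hM⟩ := Metric.cauchySeq_iff.mp hf ((((1 / 2 : ℝ) ^ e)) ^ N) (zpow_pos hρF0 N)
      refine ⟨M, fun a ha b hb => ?_⟩
      have h1 := hM a ha b hb
      rw [dist_eq_norm, hnF] at h1
      exact (hvF.zvnorm_le_iff hρF0 hρF1).mp h1.le
    obtain ⟨L, hL⟩ := hF.complete f hcau
    refine ⟨L, Metric.tendsto_atTop.mpr ?_⟩
    intro ε hε
    obtain ⟨k, hk⟩ := exists_pow_lt_of_lt_one hε hρF1
    obtain ⟨M, hM⟩ := hL (k : ℤ)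
    refine ⟨M, fun n hn => ?_⟩
    rw [dist_eq_norm, hnF]
    calc zvnorm vF ((1 / 2) ^ e) (f n - L) ≤ ((1 / 2 : ℝ) ^ e) ^ (k : ℤ) :=
        (hvF.zvnorm_le_iff hρF0 hρF1).mpr (hM n hn)
    _ = ((1 / 2 : ℝ) ^ e) ^ k := zpow_natCast _ k
    _ < ε := hk
  -- the subalgebra A
  set A := Algebra.adjoin F {(c' : E)} with hA
  have hc'A : (↑c' : E) ∈ A := Algebra.subset_adjoin (Set.mem_singleton _)
  have hy'A : y' ∈ A := by
    have h1 : y' = algebraMap F E (πF ^ (-m)) * (↑c' : E) ^ e := by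
      rw [hy', map_zpow₀]
    rw [h1]
    exact A.mul_mem (A.algebraMap_mem _) (A.pow_mem hc'A e)
  have haeval : ∀ Q : Polynomial F, Polynomial.aeval y' Q ∈ A := by
    intro Q
    have h1 : Polynomial.aeval y' Q ∈ Algebra.adjoin F {y'} := by
      rw [Algebra.adjoin_singleton_eq_range_aeval]
      exact ⟨Q, rfl⟩
    exact Algebra.adjoin_le (Set.singleton_subset_iff.mpr hy'A) h1
  -- single approximation step
  have hstep : ∀ x : E, ∃ g ∈ A, vE x + 1 ≤ vE (x - g) := by
    intro x
    rcases eq_or_ne x 0 with rfl | hx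
    · exact ⟨0, A.zero_mem, by rw [sub_zero, hvE.map_zero]; exact le_top⟩
    obtain ⟨n, hn⟩ := hvE.v_eq_coe hx
    obtain ⟨s, t, hst⟩ := Int.isCoprime_iff_gcd_eq_one.mpr hgcd
    have he' : (0 : ℤ) < (e : ℤ) := by exact_mod_cast he1
    set q : ℤ := (n * s) / (e : ℤ) with hq
    set r : ℤ := (n * s) % (e : ℤ) with hr
    have hr0 : 0 ≤ r := Int.emod_nonneg _ he'.ne'
    have hqr : (e : ℤ) * q + r = n * s := Int.mul_ediv_add_emod _ _
    set α : ℤ := n * t + q * m with hα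
    have hsum : α * (e : ℤ) + r * m = n := by
      have hrr : r = n * s - (e : ℤ) * q := by omega
      rw [hα, hrr]
      linear_combination n * hst
    set z : E := algebraMap F E (πF ^ α) * (↑c' : E) ^ r.toNat with hz
    have hzA : z ∈ A := A.mul_mem (A.algebraMap_mem _) (A.pow_mem hc'A _)
    have hπα : vF (πF ^ α) = ((α : ℤ) : WithTop ℤ) := by
      have hπ1 : vF πF = ((1 : ℤ) : WithTop ℤ) := by exact_mod_cast hπF
      rw [hvF.v_zpow hπ1 α]
      norm_num
    have hvz : vE z = (n : WithTop ℤ) := by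
      rw [hz, hvE.map_mul, hcomp, hπα, IsZValuation.nsmul_coe, hvE.v_pow hc' r.toNat,
        ← WithTop.coe_add]
      congr 1
      have : ((r.toNat : ℤ)) = r := Int.toNat_of_nonneg hr0
      rw [this]
      linarith [hsum]
    have hzne : z ≠ 0 := hvE.ne_zero_of_v_eq hvz
    have hxz : vE (x * z⁻¹) = ((0 : ℤ) : WithTop ℤ) := by
      rw [hvE.map_mul, hn, hvE.v_inv hvz, ← WithTop.coe_add]
      norm_num
    obtain ⟨Q, hQc, hQv⟩ := hRG' (x * z⁻¹) (by rw [hxz]; exact_mod_cast le_refl (0:ℤ))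
    refine ⟨z * Polynomial.aeval y' Q, A.mul_mem hzA (haeval Q), ?_⟩
    have hfactor : x - z * Polynomial.aeval y' Q = z * (x * z⁻¹ - Polynomial.aeval y' Q) := by
      field_simp
    rw [hfactor, hvE.map_mul, hvz, hn]
    exact add_le_add_right (one_le_of_pos_withTop hQv) _
  -- iteration: every element is in A
  have hmain : ∀ x : E, x ∈ A := by
    have hclosed : IsClosed ((Subalgebra.toSubmodule A : Submodule F E) : Set E) :=
      Submodule.closed_of_finiteDimensional _
    intro x
    rcases eq_or_ne x 0 with rfl | hx0
    · exact A.zero_mem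
    obtain ⟨n0, hn0⟩ := hvE.v_eq_coe hx0
    choose g hgA hgv using hstep
    set rr : ℕ → E := fun k => Nat.rec x (fun _ xk => xk - g xk) k with hrr
    have hrr0 : rr 0 = x := rfl
    have hrrs : ∀ k, rr (k + 1) = rr k - g (rr k) := fun k => rfl
    have hinv : ∀ k : ℕ, (x - rr k ∈ A) ∧ ((n0 + k : ℤ) : WithTop ℤ) ≤ vE (rr k) := by
      intro k
      induction k with
      | zero =>
        constructor
        · rw [hrr0, sub_self]; exact A.zero_mem
        · rw [hrr0, hn0]
          exact_mod_cast le_of_eq (by norm_num)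
      | succ k ih =>
        constructor
        · rw [hrrs]
          have h1 : x - (rr k - g (rr k)) = (x - rr k) + g (rr k) := by ring
          rw [h1]
          exact A.add_mem ih.1 (hgA _)
        · rw [hrrs]
          calc ((n0 + (k + 1) : ℤ) : WithTop ℤ) = ((n0 + k : ℤ) : WithTop ℤ) + 1 := by
                rw [show (1 : WithTop ℤ) = ((1 : ℤ) : WithTop ℤ) from rfl, ← WithTop.coe_add]
                congr 1
                ring
          _ ≤ vE (rr k) + 1 := add_le_add_left ih.2 1
          _ ≤ vE (rr k - g (rr k)) := hgv (rr k)
    have htend0 : Filter.Tendsto rr Filter.atTop (nhds 0) := by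
      rw [tendsto_zero_iff_norm_tendsto_zero]
      refine squeeze_zero (fun k => norm_nonneg _) (fun k => ?_)
        ?_ (g := fun k : ℕ => (1 / 2 : ℝ) ^ (n0 : ℤ) * (1 / 2 : ℝ) ^ k)
      · rw [hnE]
        calc zvnorm vE (1 / 2) (rr k) ≤ (1 / 2 : ℝ) ^ ((n0 + k : ℤ)) :=
            (hvE.zvnorm_le_iff hρ0 hρ1).mpr (hinv k).2
        _ = (1 / 2 : ℝ) ^ (n0 : ℤ) * (1 / 2 : ℝ) ^ k := by
            rw [zpow_add₀ (by norm_num : (1/2 : ℝ) ≠ 0), zpow_natCast]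
      · have h1 : Filter.Tendsto (fun k : ℕ => (1 / 2 : ℝ) ^ k) Filter.atTop (nhds 0) :=
          tendsto_pow_atTop_nhds_zero_of_lt_one (by norm_num) (by norm_num)
        have h2 := h1.const_mul ((1 / 2 : ℝ) ^ (n0 : ℤ))
        rwa [mul_zero] at h2
    have htend : Filter.Tendsto (fun k => x - rr k) Filter.atTop (nhds x) := by
      have h1 := (tendsto_const_nhds (x := x) (f := Filter.atTop (α := ℕ))).sub htend0
      rwa [sub_zero] at h1
    have hmem : x ∈ (Subalgebra.toSubmodule A : Submodule F E) := by
      refine hclosed.mem_of_tendsto htend (Filter.Eventually.of_forall fun k => ?_)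
      simpa using (hinv k).1
    simpa using hmem
  refine ⟨Algebra.eq_top_iff.mpr hmain, m, hc', hgcd, hRG'⟩
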